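/- arXiv:2206.13086 — 2 statements merged into one kernel-verified Lean document; each statement's English description precedes it below -/
import Mathlib

section
/- For every γ ≥ 0 there exists a constant C_1 > 0 depending only on γ such that for every integer d ≥ 1 and all probability vectors p, q ∈ [0,1]^d the following holds: if v̂ ∈ {0,1}^d maximizes v ↦ Dice_γ(v; q) over {0,1}^d and v* ∈ {0,1}^d maximizes v ↦ Dice_γ(v; p) over {0,1}^d, then the excess Dice risk of the plug-in rule satisfies Dice_γ(v*; p) − Dice_γ(v̂; p) ≤ C_1 Σ_{j=1}^{d} |q_j − p_j|. -/
open Finset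

/-- Weight of a binary configuration `y` under independent Bernoulli probabilities `p`. -/
noncomputable def bw {d : ℕ} (p : Fin d → ℝ) (y : Fin d → Bool) : ℝ :=
  ∏ j, if y j = true then p j else 1 - p j

/-- Number of `true` coordinates of `y`. -/
def cnt {d : ℕ} (y : Fin d → Bool) : ℕ :=
  (Finset.univ.filter (fun j => y j = true)).card

/-- The Dice score `Dice_γ(v; p) = E[(2 Σⱼ vⱼ Yⱼ + γ)/(Σⱼ Yⱼ + Σⱼ vⱼ + γ)]`
for independent Bernoulli `Yⱼ` with success probabilities `pⱼ` (convention 0/0 = 0). -/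
noncomputable def dice {d : ℕ} (γ : ℝ) (p : Fin d → ℝ) (v : Fin d → Bool) : ℝ :=
  ∑ y : Fin d → Bool, bw p y *
    ((2 * ((Finset.univ.filter (fun j => v j = true ∧ y j = true)).card : ℝ) + γ) /
      ((cnt y : ℝ) + (cnt v : ℝ) + γ))

/-- The Dice fraction is in `[0,1]`. -/
lemma dice_frac_mem {d : ℕ} (γ : ℝ) (hγ : 0 ≤ γ) (v y : Fin d → Bool) :
    (2 * ((Finset.univ.filter (fun j => v j = true ∧ y j = true)).card : ℝ) + γ) /
      ((cnt y : ℝ) + (cnt v : ℝ) + γ) ∈ Set.Icc (0:ℝ) 1 := by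
  set c : ℕ := (Finset.univ.filter (fun j => v j = true ∧ y j = true)).card with hc
  have hcy : c ≤ cnt y := Finset.card_le_card (by intro j hj; simp_all [Finset.mem_filter])
  have hcv : c ≤ cnt v := Finset.card_le_card (by intro j hj; simp_all [Finset.mem_filter])
  have hnum : (0:ℝ) ≤ 2 * c + γ := by positivity
  have hle : (2 * (c:ℝ) + γ) ≤ ((cnt y : ℝ) + (cnt v : ℝ) + γ) := by
    have h1 : (c:ℝ) ≤ (cnt y : ℝ) := Nat.cast_le.2 hcy
    have h2 : (c:ℝ) ≤ (cnt v : ℝ) := Nat.cast_le.2 hcv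
    linarith
  have hden : (0:ℝ) ≤ (cnt y : ℝ) + (cnt v : ℝ) + γ := by positivity
  rcases hden.eq_or_lt with h | h
  · have : (2 * (c:ℝ) + γ) = 0 := le_antisymm (by linarith) hnum
    rw [← h]
    simp [this]
  · exact ⟨div_nonneg hnum h.le, (div_le_one h).2 hle⟩

lemma sum_prod_erase {d : ℕ} (k : Fin d) (g : Fin d → Bool → ℝ)
    (h : ∀ j, j ≠ k → g j true + g j false = 1) (hk : ∀ b, g k b = 1) :
    ∑ y : Fin d → Bool, ∏ j, g j (y j) = 2 := by
  rw [← Fintype.piFinset_univ, ← Finset.prod_univ_sum]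
  have : ∀ j, ∑ b : Bool, g j b = if j = k then 2 else 1 := by
    intro j
    by_cases hj : j = k
    · subst hj; simp [Fintype.sum_bool, hk]
    · simp only [Fintype.sum_bool, if_neg hj]
      linarith [h j hj]
  rw [Finset.prod_congr rfl (fun j _ => this j)]
  simp

/-- One-coordinate Lipschitz bound for `dice`. -/
lemma dice_coord_lip {d : ℕ} (γ : ℝ) (hγ : 0 ≤ γ) (k : Fin d) (r r' : Fin d → ℝ)
    (hr : ∀ j, r j ∈ Set.Icc (0:ℝ) 1) (hr' : ∀ j, r' j ∈ Set.Icc (0:ℝ) 1)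
    (hagree : ∀ j, j ≠ k → r j = r' j) (v : Fin d → Bool) :
    |dice γ r v - dice γ r' v| ≤ 2 * |r k - r' k| := by
  set f : (Fin d → Bool) → ℝ := fun y =>
    (2 * ((Finset.univ.filter (fun j => v j = true ∧ y j = true)).card : ℝ) + γ) /
      ((cnt y : ℝ) + (cnt v : ℝ) + γ) with hf
  have hfm : ∀ y, f y ∈ Set.Icc (0:ℝ) 1 := fun y => dice_frac_mem γ hγ v y
  have hdiff : dice γ r v - dice γ r' v = ∑ y : Fin d → Bool, (bw r y - bw r' y) * f y := by
    rw [dice, dice, ← Finset.sum_sub_distrib]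
    exact Finset.sum_congr rfl (fun y _ => by ring)
  have hbw : ∀ y : Fin d → Bool, |bw r y - bw r' y| ≤
      |r k - r' k| * ∏ j ∈ Finset.univ.erase k, (if y j = true then r j else 1 - r j) := by
    intro y
    have hP : (0:ℝ) ≤ ∏ j ∈ Finset.univ.erase k, (if y j = true then r j else 1 - r j) := by
      apply Finset.prod_nonneg
      intro j _
      rcases hr j with ⟨h0, h1⟩
      split <;> linarith
    have hsplit : ∀ s : Fin d → ℝ, (∀ j, j ≠ k → s j = r j) →
        bw s y = (if y k = true then s k else 1 - s k) *
          ∏ j ∈ Finset.univ.erase k, (if y j = true then r j else 1 - r j) := by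
      intro s hs
      rw [bw, ← Finset.mul_prod_erase Finset.univ _ (Finset.mem_univ k)]
      congr 1
      exact Finset.prod_congr rfl (fun j hj => by
        rw [hs j (Finset.mem_erase.1 hj).1])
    rw [hsplit r (fun j _ => rfl), hsplit r' (fun j hj => (hagree j hj).symm), ← sub_mul,
      abs_mul, abs_of_nonneg hP]
    apply mul_le_mul_of_nonneg_right _ hP
    split
    · exact le_refl _
    · rw [show (1 - r k) - (1 - r' k) = -(r k - r' k) by ring, abs_neg]
  calc |dice γ r v - dice γ r' v|
      ≤ ∑ y : Fin d → Bool, |(bw r y - bw r' y) * f y| := by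
        rw [hdiff]; exact Finset.abs_sum_le_sum_abs _ _
    _ ≤ ∑ y : Fin d → Bool,
          |r k - r' k| * ∏ j ∈ Finset.univ.erase k, (if y j = true then r j else 1 - r j) := by
        apply Finset.sum_le_sum
        intro y _
        rw [abs_mul]
        calc |bw r y - bw r' y| * |f y| ≤ |bw r y - bw r' y| * 1 := by
              apply mul_le_mul_of_nonneg_left _ (abs_nonneg _)
              rw [abs_of_nonneg (hfm y).1]; exact (hfm y).2
          _ = |bw r y - bw r' y| := mul_one _
          _ ≤ _ := hbw y
    _ = |r k - r' k| * ∑ y : Fin d → Bool,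
          ∏ j ∈ Finset.univ.erase k, (if y j = true then r j else 1 - r j) := by
        rw [Finset.mul_sum]
    _ = |r k - r' k| * 2 := by
        congr 1
        have := sum_prod_erase k
          (fun j b => if j = k then 1 else (if b = true then r j else 1 - r j))
          (fun j hj => by simp [hj]) (fun b => by simp)
        rw [← this]
        apply Finset.sum_congr rfl
        intro y _
        rw [← Finset.mul_prod_erase Finset.univ
          (fun j => if j = k then (1:ℝ) else (if y j = true then r j else 1 - r j))
          (Finset.mem_univ k), if_pos rfl, one_mul]
        exact Finset.prod_congr rfl (fun j hj => by
          rw [if_neg (Finset.mem_erase.1 hj).1])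
    _ = 2 * |r k - r' k| := mul_comm _ _

/-- ℓ¹-Lipschitz bound for `dice` in the probability vector. -/
lemma dice_lip {d : ℕ} (γ : ℝ) (hγ : 0 ≤ γ) (p q : Fin d → ℝ)
    (hp : ∀ j, p j ∈ Set.Icc (0:ℝ) 1) (hq : ∀ j, q j ∈ Set.Icc (0:ℝ) 1)
    (v : Fin d → Bool) :
    |dice γ p v - dice γ q v| ≤ 2 * ∑ j, |q j - p j| := by
  set h : ℕ → (Fin d → ℝ) := fun k j => if (j : ℕ) < k then q j else p j with hh
  have hmem : ∀ k j, h k j ∈ Set.Icc (0:ℝ) 1 := by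
    intro k j; by_cases hc : (j:ℕ) < k <;> simp [hh, hc, hp j, hq j]
  have h0 : h 0 = p := by funext j; simp [hh]
  have hd : h d = q := by funext j; simp [hh, j.isLt]
  have htel : dice γ q v - dice γ p v
      = ∑ k ∈ Finset.range d, (dice γ (h (k+1)) v - dice γ (h k) v) := by
    rw [Finset.sum_range_sub (fun k => dice γ (h k) v), h0, hd]
  set g : ℕ → ℝ := fun i => if hi : i < d then 2 * |q ⟨i, hi⟩ - p ⟨i, hi⟩| else 0 with hg
  have hstep : ∀ k ∈ Finset.range d,
      |dice γ (h (k+1)) v - dice γ (h k) v| ≤ g k := by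
    intro k hkr
    have hk : k < d := Finset.mem_range.1 hkr
    have hb := dice_coord_lip γ hγ ⟨k, hk⟩ (h (k+1)) (h k) (hmem _) (hmem _)
      (fun j hj => by
        have hne : (j:ℕ) ≠ k := fun hc => hj (Fin.ext hc)
        simp only [hh]
        by_cases hlt : (j:ℕ) < k
        · rw [if_pos (by omega), if_pos hlt]
        · rw [if_neg (by omega), if_neg hlt]) v
    have h1 : h (k+1) ⟨k, hk⟩ = q ⟨k, hk⟩ := by simp [hh]
    have h2 : h k ⟨k, hk⟩ = p ⟨k, hk⟩ := by simp [hh]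
    rw [h1, h2] at hb
    rw [hg]
    simpa [hk] using hb
  calc |dice γ p v - dice γ q v|
      = |∑ k ∈ Finset.range d, (dice γ (h (k+1)) v - dice γ (h k) v)| := by
        rw [← htel, abs_sub_comm]
    _ ≤ ∑ k ∈ Finset.range d, |dice γ (h (k+1)) v - dice γ (h k) v| :=
        Finset.abs_sum_le_sum_abs _ _
    _ ≤ ∑ k ∈ Finset.range d, g k := Finset.sum_le_sum hstep
    _ = ∑ j : Fin d, g j := (Fin.sum_univ_eq_sum_range g d).symm
    _ = 2 * ∑ j, |q j - p j| := by
        rw [Finset.mul_sum]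
        exact Finset.sum_congr rfl (fun j _ => by simp [hg, j.isLt])

/-- **Excess Dice risk of the plug-in (RankDice) rule.** For every `γ ≥ 0` there is a
constant `C₁ > 0` depending only on `γ` such that for all `d ≥ 1` and all probability
vectors `p, q ∈ [0,1]^d`: if `v̂` maximizes `Dice_γ(·; q)` and `v*` maximizes
`Dice_γ(·; p)` over `{0,1}^d`, then
`Dice_γ(v*; p) - Dice_γ(v̂; p) ≤ C₁ Σⱼ |qⱼ - pⱼ|`. -/
theorem dice_excess_risk_bound (γ : ℝ) (hγ : 0 ≤ γ) :
    ∃ C1 : ℝ, 0 < C1 ∧ ∀ d : ℕ, 1 ≤ d → ∀ p q : Fin d → ℝ,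
      (∀ j, p j ∈ Set.Icc (0 : ℝ) 1) → (∀ j, q j ∈ Set.Icc (0 : ℝ) 1) →
      ∀ vhat vstar : Fin d → Bool,
        (∀ w : Fin d → Bool, dice γ q w ≤ dice γ q vhat) →
        (∀ w : Fin d → Bool, dice γ p w ≤ dice γ p vstar) →
        dice γ p vstar - dice γ p vhat ≤ C1 * ∑ j, |q j - p j| := by
  refine ⟨4, by norm_num, ?_⟩
  intro d hd p q hp hq vhat vstar hhat hstar
  have h1 : dice γ p vstar - dice γ q vstar ≤ 2 * ∑ j, |q j - p j| :=
    (le_abs_self _).trans (dice_lip γ hγ p q hp hq vstar)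
  have h2 : dice γ q vhat - dice γ p vhat ≤ 2 * ∑ j, |q j - p j| := by
    have := dice_lip γ hγ p q hp hq vhat
    rw [abs_sub_comm] at this
    exact (le_abs_self _).trans this
  have h3 : dice γ q vstar ≤ dice γ q vhat := hhat vstar
  have : dice γ p vstar - dice γ p vhat
      = (dice γ p vstar - dice γ q vstar) + (dice γ q vstar - dice γ q vhat)
        + (dice γ q vhat - dice γ p vhat) := by ring
  rw [this]
  have h4 : dice γ q vstar - dice γ q vhat ≤ 0 := by linarith
  linarith
end

section
/- For every γ ≥ 0 there exists a constant C_2 > 0 depending only on γ such that for every integer d ≥ 1, all probability vectors p, q ∈ [0,1]^d, and every v ∈ {0,1}^d: |IoU_γ(v; q) − IoU_γ(v; p)| ≤ C_2 Σ_{j=1}^{d} |q_j − p_j|; consequently, if v̂ maximizes v ↦ IoU_γ(v; q) over {0,1}^d and v* maximizes v ↦ IoU_γ(v; p) over {0,1}^d, then IoU_γ(v*; p) − IoU_γ(v̂; p) ≤ 2 C_2 Σ_{j=1}^{d} |q_j − p_j|. -/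
open Finset

/-- The IoU score
`IoU_γ(v; p) = E[(Σⱼ vⱼYⱼ + γ)/(Σⱼ Yⱼ + Σⱼ vⱼ - Σⱼ vⱼYⱼ + γ)]`
for independent Bernoulli `Yⱼ` with success probabilities `pⱼ` (convention 0/0 = 0). -/
noncomputable def iou {d : ℕ} (γ : ℝ) (p : Fin d → ℝ) (v : Fin d → Bool) : ℝ :=
  ∑ y : Fin d → Bool, bw p y *
    ((((Finset.univ.filter (fun j => v j = true ∧ y j = true)).card : ℝ) + γ) /
      ((cnt y : ℝ) + (cnt v : ℝ) -
        ((Finset.univ.filter (fun j => v j = true ∧ y j = true)).card : ℝ) + γ))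

lemma ratio_mem {d : ℕ} (γ : ℝ) (hγ : 0 ≤ γ) (v y : Fin d → Bool) :
    (((Finset.univ.filter (fun j => v j = true ∧ y j = true)).card : ℝ) + γ) /
      ((cnt y : ℝ) + (cnt v : ℝ) -
        ((Finset.univ.filter (fun j => v j = true ∧ y j = true)).card : ℝ) + γ)
      ∈ Set.Icc (0 : ℝ) 1 := by
  have hcy : ((Finset.univ.filter (fun j => v j = true ∧ y j = true)).card : ℝ) ≤ (cnt y : ℝ) := by
    have : (Finset.univ.filter (fun j => v j = true ∧ y j = true)).card ≤
        (Finset.univ.filter (fun j => y j = true)).card := by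
      apply Finset.card_le_card
      intro x hx
      simp only [Finset.mem_filter, Finset.mem_univ, true_and] at hx ⊢
      exact hx.2
    unfold cnt
    exact_mod_cast this
  have hcv : ((Finset.univ.filter (fun j => v j = true ∧ y j = true)).card : ℝ) ≤ (cnt v : ℝ) := by
    have : (Finset.univ.filter (fun j => v j = true ∧ y j = true)).card ≤
        (Finset.univ.filter (fun j => v j = true)).card := by
      apply Finset.card_le_card
      intro x hx
      simp only [Finset.mem_filter, Finset.mem_univ, true_and] at hx ⊢
      exact hx.1
    unfold cnt
    exact_mod_cast this
  set c : ℝ := ((Finset.univ.filter (fun j => v j = true ∧ y j = true)).card : ℝ) with hc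
  have hc0 : 0 ≤ c := by positivity
  set D : ℝ := (cnt y : ℝ) + (cnt v : ℝ) - c + γ with hD
  by_cases h0 : D = 0
  · rw [h0, div_zero]; exact ⟨le_refl _, zero_le_one⟩
  · have hDpos : 0 < D := lt_of_le_of_ne (by simp only [hD]; linarith) (Ne.symm h0)
    constructor
    · positivity
    · rw [div_le_one hDpos]; simp only [hD]; linarith

lemma bw_sub {d : ℕ} (p : Fin d → ℝ) (j : Fin d) (t : ℝ) (y : Fin d → Bool) :
    bw (Function.update p j t) y - bw p y
      = ((if y j = true then t else 1 - t) - (if y j = true then p j else 1 - p j)) *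
        ∏ i ∈ univ.erase j, (if y i = true then p i else 1 - p i) := by
  unfold bw
  rw [← Finset.mul_prod_erase univ
        (fun i => if y i = true then Function.update p j t i else 1 - Function.update p j t i)
        (mem_univ j),
      ← Finset.mul_prod_erase univ (fun i => if y i = true then p i else 1 - p i) (mem_univ j)]
  have hW : ∏ i ∈ univ.erase j,
      (if y i = true then Function.update p j t i else 1 - Function.update p j t i)
      = ∏ i ∈ univ.erase j, (if y i = true then p i else 1 - p i) := by
    apply Finset.prod_congr rfl
    intro i hi
    rw [Function.update_of_ne (Finset.ne_of_mem_erase hi)]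
  rw [hW, Function.update_self]
  ring

lemma sum_prod_erase_s14 {d : ℕ} (p : Fin d → ℝ) (hp : ∀ i, p i ∈ Set.Icc (0:ℝ) 1) (j : Fin d) :
    ∑ y : Fin d → Bool, ∏ i ∈ univ.erase j, (if y i = true then p i else 1 - p i) = 2 := by
  have h1 : ∀ y : Fin d → Bool,
      ∏ i ∈ univ.erase j, (if y i = true then p i else 1 - p i)
        = ∏ i, (if i = j then (1:ℝ) else if y i = true then p i else 1 - p i) := by
    intro y
    rw [eq_comm, ← Finset.mul_prod_erase univ
        (fun i => if i = j then (1:ℝ) else if y i = true then p i else 1 - p i) (mem_univ j)]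
    simp only [eq_self_iff_true, if_true, one_mul]
    exact Finset.prod_congr rfl fun i hi => if_neg (Finset.ne_of_mem_erase hi)
  simp_rw [h1]
  have key := Finset.prod_univ_sum (fun _ : Fin d => (univ : Finset Bool))
    (fun i b => if i = j then (1:ℝ) else if b = true then p i else 1 - p i)
  rw [Fintype.piFinset_univ] at key
  rw [← key]
  have h2 : ∀ i : Fin d,
      (∑ b ∈ (univ : Finset Bool), (if i = j then (1:ℝ) else if b = true then p i else 1 - p i))
        = if i = j then 2 else 1 := by
    intro i
    by_cases h : i = j
    · simp [h]
    · simp [h]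
  rw [Finset.prod_congr rfl (fun i _ => h2 i)]
  simp

lemma iou_update {d : ℕ} (γ : ℝ) (hγ : 0 ≤ γ) (p : Fin d → ℝ)
    (hp : ∀ i, p i ∈ Set.Icc (0:ℝ) 1) (j : Fin d) (t : ℝ) (v : Fin d → Bool) :
    |iou γ (Function.update p j t) v - iou γ p v| ≤ 2 * |t - p j| := by
  unfold iou
  rw [← Finset.sum_sub_distrib]
  simp_rw [← sub_mul]
  have hterm : ∀ y : Fin d → Bool,
      |(bw (Function.update p j t) y - bw p y) *
        ((((Finset.univ.filter (fun j => v j = true ∧ y j = true)).card : ℝ) + γ) /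
          ((cnt y : ℝ) + (cnt v : ℝ) -
            ((Finset.univ.filter (fun j => v j = true ∧ y j = true)).card : ℝ) + γ))|
      ≤ |t - p j| * ∏ i ∈ univ.erase j, (if y i = true then p i else 1 - p i) := by
    intro y
    have hf := ratio_mem γ hγ v y
    have hW0 : 0 ≤ ∏ i ∈ univ.erase j, (if y i = true then p i else 1 - p i) := by
      apply Finset.prod_nonneg
      intro i _
      by_cases h : y i = true
      · simp [h]; exact (hp i).1
      · simp [h]; linarith [(hp i).2]
    have habs : |bw (Function.update p j t) y - bw p y|
        = |t - p j| * ∏ i ∈ univ.erase j, (if y i = true then p i else 1 - p i) := by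
      rw [bw_sub, abs_mul, abs_of_nonneg hW0]
      congr 1
      by_cases h : y j = true
      · simp [h]
      · simp [h, abs_sub_comm]
    rw [abs_mul, habs]
    have hf1 : |(((Finset.univ.filter (fun j => v j = true ∧ y j = true)).card : ℝ) + γ) /
          ((cnt y : ℝ) + (cnt v : ℝ) -
            ((Finset.univ.filter (fun j => v j = true ∧ y j = true)).card : ℝ) + γ)| ≤ 1 := by
      rw [abs_of_nonneg hf.1]; exact hf.2
    have h2 := mul_le_mul_of_nonneg_left hf1 (mul_nonneg (abs_nonneg (t - p j)) hW0)
    simpa using h2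
  refine le_trans (Finset.abs_sum_le_sum_abs _ _) ?_
  refine le_trans (Finset.sum_le_sum fun y _ => hterm y) ?_
  rw [← Finset.mul_sum, sum_prod_erase_s14 p hp j]
  exact le_of_eq (by ring)

lemma iou_mix {d : ℕ} (γ : ℝ) (hγ : 0 ≤ γ) (p q : Fin d → ℝ)
    (hp : ∀ i, p i ∈ Set.Icc (0:ℝ) 1) (hq : ∀ i, q i ∈ Set.Icc (0:ℝ) 1)
    (v : Fin d → Bool) (s : Finset (Fin d)) :
    |iou γ (fun i => if i ∈ s then q i else p i) v - iou γ p v| ≤ 2 * ∑ j ∈ s, |q j - p j| := by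
  induction s using Finset.induction_on with
  | empty => simp
  | @insert a s ha ih =>
    have hmix : ∀ i, (fun i => if i ∈ s then q i else p i) i ∈ Set.Icc (0:ℝ) 1 := by
      intro i; by_cases h : i ∈ s <;> simp [h] <;> [exact ⟨(hq i).1, (hq i).2⟩; exact ⟨(hp i).1, (hp i).2⟩]
    have heq : (fun i => if i ∈ insert a s then q i else p i)
        = Function.update (fun i => if i ∈ s then q i else p i) a (q a) := by
      funext i
      by_cases h : i = a
      · subst h; simp [Function.update_self]
      · rw [Function.update_of_ne h]
        simp [Finset.mem_insert, h]
    have hstep := iou_update γ hγ (fun i => if i ∈ s then q i else p i) hmix a (q a) v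
    rw [← heq] at hstep
    have hma : (if a ∈ s then q a else p a) = p a := by simp [ha]
    rw [hma] at hstep
    rw [Finset.sum_insert ha]
    calc |iou γ (fun i => if i ∈ insert a s then q i else p i) v - iou γ p v|
        ≤ |iou γ (fun i => if i ∈ insert a s then q i else p i) v
            - iou γ (fun i => if i ∈ s then q i else p i) v|
          + |iou γ (fun i => if i ∈ s then q i else p i) v - iou γ p v| := by
          exact abs_sub_le _ _ _
      _ ≤ 2 * |q a - p a| + 2 * ∑ j ∈ s, |q j - p j| := add_le_add hstep ih
      _ = 2 * (|q a - p a| + ∑ j ∈ s, |q j - p j|) := by ring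

lemma iou_stab {d : ℕ} (γ : ℝ) (hγ : 0 ≤ γ) (p q : Fin d → ℝ)
    (hp : ∀ i, p i ∈ Set.Icc (0:ℝ) 1) (hq : ∀ i, q i ∈ Set.Icc (0:ℝ) 1)
    (v : Fin d → Bool) :
    |iou γ q v - iou γ p v| ≤ 2 * ∑ j, |q j - p j| := by
  have := iou_mix γ hγ p q hp hq v Finset.univ
  simpa using this

/-- **L1-stability and excess risk for IoU.** For every `γ ≥ 0` there is a constant
`C₂ > 0` depending only on `γ` such that for all `d ≥ 1`, all probability vectors
`p, q ∈ [0,1]^d` and every `v ∈ {0,1}^d`,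
`|IoU_γ(v; q) - IoU_γ(v; p)| ≤ C₂ Σⱼ |qⱼ - pⱼ|`; consequently, if `v̂` maximizes
`IoU_γ(·; q)` and `v*` maximizes `IoU_γ(·; p)` over `{0,1}^d`, then
`IoU_γ(v*; p) - IoU_γ(v̂; p) ≤ 2C₂ Σⱼ |qⱼ - pⱼ|`. -/
theorem iou_l1_stability_and_excess_risk (γ : ℝ) (hγ : 0 ≤ γ) :
    ∃ C2 : ℝ, 0 < C2 ∧ ∀ d : ℕ, 1 ≤ d → ∀ p q : Fin d → ℝ,
      (∀ j, p j ∈ Set.Icc (0 : ℝ) 1) → (∀ j, q j ∈ Set.Icc (0 : ℝ) 1) →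
      (∀ v : Fin d → Bool, |iou γ q v - iou γ p v| ≤ C2 * ∑ j, |q j - p j|) ∧
      (∀ vhat vstar : Fin d → Bool,
        (∀ w : Fin d → Bool, iou γ q w ≤ iou γ q vhat) →
        (∀ w : Fin d → Bool, iou γ p w ≤ iou γ p vstar) →
        iou γ p vstar - iou γ p vhat ≤ 2 * C2 * ∑ j, |q j - p j|) := by
  refine ⟨2, two_pos, fun d _ p q hp hq => ?_⟩
  refine ⟨fun v => iou_stab γ hγ p q hp hq v, fun vhat vstar hhat hstar => ?_⟩
  have h1 := abs_le.mp (iou_stab γ hγ p q hp hq vstar)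
  have h2 := abs_le.mp (iou_stab γ hγ p q hp hq vhat)
  have h3 := hhat vstar
  linarith [h1.1, h1.2, h2.1, h2.2]
end
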